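/- arXiv:1504.08181 — 4 statements merged into one kernel-verified Lean document; each statement's English description precedes it below -/
import Mathlib

section
/- Let A → B → C be local homomorphisms of commutative Noetherian local rings such that B is flat as an A-module and C is flat as a B-module. Assume that the map B → C is formally étale and that the composite map A → C is formally unramified. Then A → B is formally unramified, i.e. the module of Kähler differentials Ω¹_{B/A} vanishes (so that, being flat and unramified, A → B is étale). -/
universe u

open TensorProduct

theorem subsingleton_tensor_kaehler
    (A B C : Type u) [CommRing A] [CommRing B] [CommRing C]
    [Algebra A B] [Algebra B C] [Algebra A C] [IsScalarTower A B C]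
    [Algebra.FormallySmooth B C] [Algebra.FormallyUnramified A C] :
    Subsingleton (C ⊗[B] Ω[B⁄A]) := by
  let ψ : Ω[B⁄A] →ₗ[B] C ⊗[B] Ω[B⁄A] := TensorProduct.mk B C (Ω[B⁄A]) 1
  let D := KaehlerDifferential.D A B
  suffices h : ∀ b : B, ψ (D b) = 0 by
    have hall : ∀ x : Ω[B⁄A], ψ x = 0 := by
      intro x
      have hx : x ∈ Submodule.span B (Set.range (D : B → Ω[B⁄A])) := by
        rw [KaehlerDifferential.span_range_derivation]; trivial
      refine Submodule.span_induction ?_ ?_ ?_ ?_ hx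
      · rintro _ ⟨b, rfl⟩; exact h b
      · simp
      · intro x y _ _ hx hy; rw [map_add, hx, hy, add_zero]
      · intro b x _ hx; rw [map_smul, hx, smul_zero]
    constructor
    have hz : ∀ z : C ⊗[B] Ω[B⁄A], z = 0 := by
      intro z
      induction z using TensorProduct.induction_on with
      | zero => rfl
      | tmul c x =>
        have h1 : c ⊗ₜ[B] x = c • ((1 : C) ⊗ₜ[B] x) := by
          rw [smul_tmul', smul_eq_mul, mul_one]
        have h2 : (1 : C) ⊗ₜ[B] x = ψ x := rfl
        rw [h1, h2, hall, smul_zero]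
      | add x y hx hy => rw [hx, hy, add_zero]
    intro z w
    rw [hz z, hz w]
  -- construct the square-zero extension
  let φ : B →+* (TrivSqZeroExt C (C ⊗[B] Ω[B⁄A])) :=
    { toFun := fun b => TrivSqZeroExt.inl (algebraMap B C b) + TrivSqZeroExt.inr (ψ (D b))
      map_one' := by
        refine TrivSqZeroExt.ext ?_ ?_
        · simp only [TrivSqZeroExt.fst_add, TrivSqZeroExt.fst_inl, TrivSqZeroExt.fst_inr,
            map_one, add_zero, TrivSqZeroExt.fst_one]
        · simp only [TrivSqZeroExt.snd_add, TrivSqZeroExt.snd_inl, TrivSqZeroExt.snd_inr,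
            zero_add, TrivSqZeroExt.snd_one, Derivation.map_one_eq_zero, map_zero]
      map_mul' := fun b b' => by
        refine TrivSqZeroExt.ext ?_ ?_
        · simp only [TrivSqZeroExt.fst_mul, TrivSqZeroExt.fst_add, TrivSqZeroExt.fst_inl,
            TrivSqZeroExt.fst_inr, map_mul, add_zero]
        · simp only [TrivSqZeroExt.snd_mul, TrivSqZeroExt.snd_add, TrivSqZeroExt.snd_inl,
            TrivSqZeroExt.snd_inr, TrivSqZeroExt.fst_add, TrivSqZeroExt.fst_inl,
            TrivSqZeroExt.fst_inr, zero_add, add_zero, op_smul_eq_smul]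
          rw [Derivation.leibniz, map_add, map_smul, map_smul,
            algebraMap_smul, algebraMap_smul]
      map_zero' := by
        refine TrivSqZeroExt.ext ?_ ?_
        · simp only [TrivSqZeroExt.fst_add, TrivSqZeroExt.fst_inl, TrivSqZeroExt.fst_inr,
            map_zero, add_zero, TrivSqZeroExt.fst_zero]
        · simp only [TrivSqZeroExt.snd_add, TrivSqZeroExt.snd_inl, TrivSqZeroExt.snd_inr,
            zero_add, TrivSqZeroExt.snd_zero, map_zero]
      map_add' := fun b b' => by
        refine TrivSqZeroExt.ext ?_ ?_
        · simp only [TrivSqZeroExt.fst_add, TrivSqZeroExt.fst_inl, TrivSqZeroExt.fst_inr,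
            map_add, add_zero]
        · simp only [TrivSqZeroExt.snd_add, TrivSqZeroExt.snd_inl, TrivSqZeroExt.snd_inr,
            zero_add, map_add] }
  letI : Algebra B (TrivSqZeroExt C (C ⊗[B] Ω[B⁄A])) := φ.toAlgebra
  letI : Algebra A (TrivSqZeroExt C (C ⊗[B] Ω[B⁄A])) := (φ.comp (algebraMap A B)).toAlgebra
  let π : (TrivSqZeroExt C (C ⊗[B] Ω[B⁄A])) →ₐ[B] C :=
    { toFun := TrivSqZeroExt.fst
      map_one' := TrivSqZeroExt.fst_one (R := C) (M := C ⊗[B] Ω[B⁄A])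
      map_mul' := TrivSqZeroExt.fst_mul (R := C) (M := C ⊗[B] Ω[B⁄A])
      map_zero' := TrivSqZeroExt.fst_zero (R := C) (M := C ⊗[B] Ω[B⁄A])
      map_add' := TrivSqZeroExt.fst_add (R := C) (M := C ⊗[B] Ω[B⁄A])
      commutes' := fun b => by
        show ((TrivSqZeroExt.inl (algebraMap B C b) : (TrivSqZeroExt C (C ⊗[B] Ω[B⁄A])))
          + TrivSqZeroExt.inr (ψ (D b))).fst = algebraMap B C b
        simp }
  have hπ : Function.Surjective π := fun c => ⟨TrivSqZeroExt.inl c, by simp [π]⟩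
  have hker : IsNilpotent (RingHom.ker (π : (TrivSqZeroExt C (C ⊗[B] Ω[B⁄A])) →+* C)) := by
    refine ⟨2, ?_⟩
    rw [Ideal.zero_eq_bot, eq_bot_iff]
    refine le_trans (le_of_eq (by rw [Submodule.pow_succ, Submodule.pow_one])) (Ideal.mul_le.2 fun x hx y hy => ?_)
    rw [RingHom.mem_ker] at hx hy
    replace hx : x.fst = 0 := hx
    replace hy : y.fst = 0 := hy
    rw [Ideal.mem_bot]
    refine TrivSqZeroExt.ext ?_ ?_
    · rw [TrivSqZeroExt.fst_mul, hx, zero_mul]; rfl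
    · rw [TrivSqZeroExt.snd_mul, hx, hy]
      simp
  let σ : C →ₐ[B] (TrivSqZeroExt C (C ⊗[B] Ω[B⁄A])) := Algebra.FormallySmooth.liftOfSurjective (AlgHom.id B C) π hπ hker
  have hσ : ∀ c : C, π (σ c) = c := fun c =>
    Algebra.FormallySmooth.liftOfSurjective_apply (AlgHom.id B C) π hπ hker c
  let σA : C →ₐ[A] (TrivSqZeroExt C (C ⊗[B] Ω[B⁄A])) :=
    { toRingHom := σ.toRingHom
      commutes' := fun a => by
        show σ (algebraMap A C a) = algebraMap A (TrivSqZeroExt C (C ⊗[B] Ω[B⁄A])) a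
        rw [IsScalarTower.algebraMap_apply A B C a]
        exact σ.commutes (algebraMap A B a) }
  let ι : C →ₐ[A] (TrivSqZeroExt C (C ⊗[B] Ω[B⁄A])) :=
    { toFun := TrivSqZeroExt.inl
      map_one' := TrivSqZeroExt.inl_one (C ⊗[B] Ω[B⁄A])
      map_mul' := fun c c' => TrivSqZeroExt.inl_mul (M := C ⊗[B] Ω[B⁄A]) c c'
      map_zero' := TrivSqZeroExt.inl_zero (C ⊗[B] Ω[B⁄A])
      map_add' := TrivSqZeroExt.inl_add (C ⊗[B] Ω[B⁄A])
      commutes' := by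
        intro a
        show TrivSqZeroExt.inl (algebraMap A C a) = φ (algebraMap A B a)
        show TrivSqZeroExt.inl (algebraMap A C a)
          = TrivSqZeroExt.inl (algebraMap B C (algebraMap A B a))
            + TrivSqZeroExt.inr (ψ (D (algebraMap A B a)))
        rw [← IsScalarTower.algebraMap_apply, Derivation.map_algebraMap, map_zero,
          TrivSqZeroExt.inr_zero, add_zero] }
  have heq : σA = ι := by
    refine Algebra.FormallyUnramified.ext' (R := A) (π : (TrivSqZeroExt C (C ⊗[B] Ω[B⁄A])) →+* C) hker _ _ fun c => ?_
    show π (σ c) = π (ι c)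
    rw [hσ]
    show c = (TrivSqZeroExt.inl c : (TrivSqZeroExt C (C ⊗[B] Ω[B⁄A]))).fst
    simp
  intro b
  have h1 : σ (algebraMap B C b) = φ b := σ.commutes b
  have h2 : σ (algebraMap B C b) = TrivSqZeroExt.inl (algebraMap B C b) :=
    congrArg (fun (f : C →ₐ[A] (TrivSqZeroExt C (C ⊗[B] Ω[B⁄A]))) => f (algebraMap B C b)) heq
  have h3 : (φ b).snd = (TrivSqZeroExt.inl (algebraMap B C b) : (TrivSqZeroExt C (C ⊗[B] Ω[B⁄A]))).snd := by
    rw [← h1, h2]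
  have h4 : (φ b).snd = ψ (D b) := by
    show ((TrivSqZeroExt.inl (algebraMap B C b) : (TrivSqZeroExt C (C ⊗[B] Ω[B⁄A])))
      + TrivSqZeroExt.inr (ψ (D b))).snd = ψ (D b)
    simp
  rw [h4, TrivSqZeroExt.snd_inl] at h3
  exact h3

theorem faithfullyFlat_of_local (B C : Type u) [CommRing B] [CommRing C]
    [IsLocalRing B] [IsLocalRing C] [Algebra B C]
    [IsLocalHom (algebraMap B C)] [Module.Flat B C] :
    Module.FaithfullyFlat B C := by
  constructor
  intro m hm htop
  have hle : m • (⊤ : Submodule B C) ≤ (IsLocalRing.maximalIdeal C).restrictScalars B := by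
    refine Submodule.smul_le.2 fun b hb c _ => ?_
    have hb' : b ∈ IsLocalRing.maximalIdeal B :=
      IsLocalRing.le_maximalIdeal hm.ne_top hb
    have : algebraMap B C b ∈ IsLocalRing.maximalIdeal C := by
      rw [IsLocalRing.mem_maximalIdeal] at hb' ⊢
      intro hu
      exact hb' (IsUnit.of_map (algebraMap B C) b hu)
    show b • c ∈ IsLocalRing.maximalIdeal C
    rw [Algebra.smul_def]
    exact Ideal.mul_mem_right c _ this
  rw [htop] at hle
  have h1 : (1 : C) ∈ IsLocalRing.maximalIdeal C := hle trivial
  exact (IsLocalRing.maximalIdeal.isMaximal C).ne_top (Ideal.eq_top_of_isUnit_mem _ h1 isUnit_one)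

/-- Lemma 7.1: If `A → B → C` are flat local homomorphisms of Noetherian local rings
with `B → C` formally étale and `A → C` formally unramified, then `A → B` is
formally unramified, i.e. `Ω¹_{B/A} = 0`. -/
theorem formallyUnramified_of_formallyEtale_comp
    (A B C : Type u) [CommRing A] [CommRing B] [CommRing C]
    [IsNoetherianRing A] [IsNoetherianRing B] [IsNoetherianRing C]
    [IsLocalRing A] [IsLocalRing B] [IsLocalRing C]
    [Algebra A B] [Algebra B C] [Algebra A C] [IsScalarTower A B C]
    [IsLocalHom (algebraMap A B)] [IsLocalHom (algebraMap B C)]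
    [Module.Flat A B] [Module.Flat B C]
    [Algebra.FormallyEtale B C] [Algebra.FormallyUnramified A C] :
    Algebra.FormallyUnramified A B ∧ Subsingleton (KaehlerDifferential A B) := by
  haveI : Algebra.FormallySmooth B C := inferInstance
  haveI hsub : Subsingleton (C ⊗[B] Ω[B⁄A]) := subsingleton_tensor_kaehler A B C
  haveI : Module.FaithfullyFlat B C := faithfullyFlat_of_local B C
  haveI : Subsingleton (Ω[B⁄A]) :=
    Module.FaithfullyFlat.lTensor_reflects_triviality B C (Ω[B⁄A])
  exact ⟨⟨inferInstance⟩, inferInstance⟩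
end

section
/- Let f : A → B be an injective, finite, formally unramified local homomorphism of commutative Noetherian local rings which induces an isomorphism of the residue fields. Then f is an isomorphism, i.e. f is bijective. -/
set_option synthInstance.maxHeartbeats 1000000 in
set_option maxHeartbeats 1000000 in
/-- A finite formally unramified algebra over a field is reduced
(universe-polymorphic version of `Algebra.FormallyUnramified.isReduced_of_field`). -/
lemma isReduced_of_field_aux.{u, v} (K : Type u) (C : Type v) [Field K] [CommRing C]
    [Algebra K C] [Module.Finite K C] [Algebra.FormallyUnramified K C] :
    IsReduced C := by
  letI : Algebra (ULift.{v} K) K :=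
    { smul := (· • ·)
      algebraMap := (ULift.ringEquiv : ULift.{v} K ≃+* K).toRingHom
      commutes' := fun r x => mul_comm _ _
      smul_def' := fun r x => rfl }
  letI : Algebra (ULift.{v} K) (ULift.{u} C) :=
    { smul := (· • ·)
      algebraMap := ((algebraMap K (ULift.{u} C)).comp
        (ULift.ringEquiv : ULift.{v} K ≃+* K).toRingHom)
      commutes' := fun r x => mul_comm _ _
      smul_def' := fun r x => by
        refine ULift.down_injective ?_
        exact Algebra.smul_def r.down x.down }
  haveI : IsScalarTower (ULift.{v} K) K (ULift.{u} C) :=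
    IsScalarTower.of_algebraMap_eq fun _ => rfl
  haveI : Algebra.FormallyUnramified (ULift.{v} K) K :=
    Algebra.FormallyUnramified.of_surjective (Algebra.ofId _ _)
      (fun k => ⟨ULift.up k, rfl⟩)
  let f : C →ₐ[K] ULift.{u} C :=
    ⟨(ULift.ringEquiv.symm : C ≃+* ULift.{u} C).toRingHom, fun _ => rfl⟩
  haveI : Algebra.FormallyUnramified K (ULift.{u} C) :=
    Algebra.FormallyUnramified.of_surjective f (fun x => ⟨x.down, rfl⟩)
  haveI : Algebra.FormallyUnramified (ULift.{v} K) (ULift.{u} C) :=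
    Algebra.FormallyUnramified.comp (ULift.{v} K) K (ULift.{u} C)
  haveI := Module.Finite.self (ULift.{v} K)
  haveI : Module.Finite (ULift.{v} K) K :=
    Module.Finite.of_surjective (Algebra.linearMap (ULift.{v} K) K)
      (fun k => ⟨ULift.up k, rfl⟩)
  haveI : Module.Finite K (ULift.{u} C) :=
    Module.Finite.of_surjective f.toLinearMap (fun x => ⟨x.down, rfl⟩)
  haveI : Module.Finite (ULift.{v} K) (ULift.{u} C) :=
    Module.Finite.trans K (ULift.{u} C)
  haveI : Algebra.EssFiniteType (ULift.{v} K) (ULift.{u} C) :=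
    Algebra.EssFiniteType.of_finiteType _ _
  haveI : IsReduced (ULift.{u} C) :=
    Algebra.FormallyUnramified.isReduced_of_field (ULift.{v} K) (ULift.{u} C)
  exact isReduced_of_injective (ULift.ringEquiv.symm : C ≃+* ULift.{u} C).toRingHom
    ULift.up_injective

/-- Lemma 7.2: An injective, finite, formally unramified local homomorphism of
Noetherian local rings inducing an isomorphism of residue fields is an isomorphism. -/
theorem bijective_of_finite_unramified_local
    (A B : Type*) [CommRing A] [CommRing B]
    [IsNoetherianRing A] [IsNoetherianRing B]
    [IsLocalRing A] [IsLocalRing B]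
    [Algebra A B] [IsLocalHom (algebraMap A B)]
    (hinj : Function.Injective (algebraMap A B))
    [Module.Finite A B] [Algebra.FormallyUnramified A B]
    (hres : Function.Bijective (IsLocalRing.ResidueField.map (algebraMap A B))) :
    Function.Bijective (algebraMap A B) := by
  classical
  have hJle : (IsLocalRing.maximalIdeal A).map (algebraMap A B) ≤
      IsLocalRing.maximalIdeal B := by
    rw [Ideal.map_le_iff_le_comap]
    intro x hx
    exact fun hu => hx (IsLocalHom.map_nonunit x hu)
  set J : Ideal B := (IsLocalRing.maximalIdeal A).map (algebraMap A B) with hJdef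
  have hJne : J ≠ ⊤ := fun h =>
    (IsLocalRing.maximalIdeal.isMaximal B).ne_top (top_le_iff.mp (h ▸ hJle))
  letI : Field (A ⧸ IsLocalRing.maximalIdeal A) := Ideal.Quotient.field _
  haveI : Nontrivial (B ⧸ J) := Ideal.Quotient.nontrivial_iff.mpr hJne
  haveI : IsLocalRing (B ⧸ J) :=
    IsLocalRing.of_surjective' (Ideal.Quotient.mk J) Ideal.Quotient.mk_surjective
  haveI : Module.Finite A (B ⧸ J) :=
    Module.Finite.of_surjective (Ideal.Quotient.mkₐ A J).toLinearMap
      Ideal.Quotient.mk_surjective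
  haveI : Module.Finite (A ⧸ IsLocalRing.maximalIdeal A) (B ⧸ J) :=
    Module.Finite.of_restrictScalars_finite A _ _
  haveI : Algebra.FormallyUnramified A (B ⧸ J) := inferInstance
  haveI : Algebra.FormallyUnramified (A ⧸ IsLocalRing.maximalIdeal A) (B ⧸ J) :=
    Algebra.FormallyUnramified.of_restrictScalars A _ _
  haveI : IsReduced (B ⧸ J) :=
    isReduced_of_field_aux (A ⧸ IsLocalRing.maximalIdeal A) (B ⧸ J)
  haveI : IsArtinianRing (B ⧸ J) :=
    isArtinian_of_tower (A ⧸ IsLocalRing.maximalIdeal A) inferInstance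
  have hnil : IsNilpotent (IsLocalRing.maximalIdeal (B ⧸ J)) := by
    rw [← IsLocalRing.jacobson_eq_maximalIdeal (⊥ : Ideal (B ⧸ J)) bot_ne_top]
    exact IsArtinianRing.isNilpotent_jacobson_bot
  have hm0 : IsLocalRing.maximalIdeal (B ⧸ J) = ⊥ := by
    obtain ⟨n, hn⟩ := hnil
    rw [eq_bot_iff]
    intro x hx
    have hxn : x ^ n = 0 := by
      have := Ideal.pow_mem_pow hx n
      rw [hn] at this
      simpa using this
    exact Ideal.mem_bot.mpr (IsNilpotent.eq_zero ⟨n, hxn⟩)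
  have hfield : IsField (B ⧸ J) := IsLocalRing.isField_iff_maximalIdeal_eq.mpr hm0
  have hJmax : J.IsMaximal := Ideal.Quotient.maximal_of_isField J hfield
  have hJeq : J = IsLocalRing.maximalIdeal B := IsLocalRing.eq_maximalIdeal hJmax
  -- Surjectivity via Nakayama
  have hsurj : Function.Surjective (algebraMap A B) := by
    set N : Submodule A B := LinearMap.range (Algebra.linearMap A B) with hN
    have hfg : (⊤ : Submodule A (B ⧸ N)).FG := Module.Finite.fg_top
    have hle : (⊤ : Submodule A (B ⧸ N)) ≤ IsLocalRing.maximalIdeal A • ⊤ := by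
      intro y _
      obtain ⟨b, rfl⟩ := N.mkQ_surjective y
      obtain ⟨a', ha'⟩ := hres.surjective (IsLocalRing.residue B b)
      obtain ⟨a, rfl⟩ := IsLocalRing.residue_surjective a'
      rw [IsLocalRing.ResidueField.map_residue] at ha'
      have hmem : b - algebraMap A B a ∈ IsLocalRing.maximalIdeal B := by
        have : IsLocalRing.residue B (b - algebraMap A B a) = 0 := by
          rw [map_sub, ha', sub_self]
        exact (Ideal.Quotient.eq_zero_iff_mem).mp this
      rw [← hJeq] at hmem
      have hmem' : b - algebraMap A B a ∈
          IsLocalRing.maximalIdeal A • (⊤ : Submodule A B) := by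
        rw [Ideal.smul_top_eq_map]
        exact hmem
      have h0 : N.mkQ (algebraMap A B a) = 0 := by
        rw [Submodule.mkQ_apply, Submodule.Quotient.mk_eq_zero]
        exact ⟨a, rfl⟩
      have h1 : N.mkQ b = N.mkQ (b - algebraMap A B a) := by
        rw [map_sub, h0, sub_zero]
      rw [h1]
      have : N.mkQ (b - algebraMap A B a) ∈
          Submodule.map N.mkQ (IsLocalRing.maximalIdeal A • ⊤) :=
        Submodule.mem_map_of_mem hmem'
      rwa [Submodule.map_smul'', Submodule.map_top, N.range_mkQ] at this
    have htop : (⊤ : Submodule A (B ⧸ N)) = ⊥ :=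
      Submodule.eq_bot_of_le_smul_of_le_jacobson_bot (IsLocalRing.maximalIdeal A) ⊤ hfg hle
        (by rw [IsLocalRing.jacobson_eq_maximalIdeal (⊥ : Ideal A) bot_ne_top])
    intro b
    have hb : N.mkQ b ∈ (⊥ : Submodule A (B ⧸ N)) := htop ▸ Submodule.mem_top
    have : b ∈ N := by
      rwa [Submodule.mem_bot, Submodule.mkQ_apply, Submodule.Quotient.mk_eq_zero] at hb
    obtain ⟨a, ha⟩ := this
    exact ⟨a, ha⟩
  exact ⟨hinj, hsurj⟩
end

section
/- Let k be a field and let R be a commutative k-algebra which is formally smooth over k and such that Ω¹_{R/k} is a free R-module. Then for every integer i ≥ 0, the i-th exterior power ⋀ⁱ_R Ω¹_{R/ℤ} is a free R-module (possibly of infinite rank). In particular Ω¹_{R/ℤ} itself is a free R-module. -/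
universe u

open ExteriorAlgebra

section
variable {R M : Type*} [CommRing R] [AddCommGroup M] [Module R M]
variable {I : Type*} [LinearOrder I] (b : Module.Basis I R M) (n : ℕ)

noncomputable def dualForm (s : {s : Finset I // s.card = n}) : M [⋀^Fin n]→ₗ[R] R :=
  ((Pi.basisFun R (Fin n)).det).compLinearMap
    (LinearMap.pi fun j => b.coord (Finset.orderIsoOfFin s.1 s.2 j))

theorem dualForm_apply (s t : {s : Finset I // s.card = n}) :
    dualForm b n s (fun i => b (Finset.orderIsoOfFin t.1 t.2 i)) = if t = s then 1 else 0 := by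
  rw [dualForm, AlternatingMap.compLinearMap_apply, Module.Basis.det_apply]
  have hM : ∀ i j, (Pi.basisFun R (Fin n)).toMatrix
      (fun i => LinearMap.pi (fun j => b.coord (Finset.orderIsoOfFin s.1 s.2 j))
        (b (Finset.orderIsoOfFin t.1 t.2 i))) i j
      = if (Finset.orderIsoOfFin t.1 t.2 j : I) = Finset.orderIsoOfFin s.1 s.2 i then 1 else 0 := by
    intro i j
    simp [Module.Basis.toMatrix_apply, Module.Basis.coord_apply, Module.Basis.repr_self, Finsupp.single_apply]
    split_ifs with h1 h2 <;> simp_all [Finset.coe_orderIsoOfFin_apply]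
  split_ifs with h
  · subst h
    rw [show ((Pi.basisFun R (Fin n)).toMatrix _) = 1 from ?_, Matrix.det_one]
    ext i j
    rw [hM i j]
    simp [Matrix.one_apply, EmbeddingLike.apply_eq_iff_eq, eq_comm]
  · -- t ≠ s : some column is zero
    have hts : ¬ t.1 ⊆ s.1 := fun hsub => h (Subtype.ext (Finset.eq_of_subset_of_card_le hsub (by rw [s.2, t.2])))
    obtain ⟨x, hxt, hxs⟩ := Finset.not_subset.mp hts
    obtain ⟨j, hj⟩ := (Finset.orderIsoOfFin t.1 t.2).surjective ⟨x, hxt⟩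
    apply Matrix.det_eq_zero_of_column_eq_zero j
    intro i
    rw [hM i j]
    simp only [hj, ite_eq_right_iff]
    intro hx
    exact absurd (hx ▸ (Finset.orderIsoOfFin s.1 s.2 i).2) hxs

theorem ιMulti_basis_mem_span (f : Fin n → I) :
    ιMulti R n (fun i => b (f i)) ∈
      Submodule.span R (Set.range (ιMulti_family R n b)) := by
  by_cases hf : Function.Injective f
  · set s : Finset I := Finset.image f Finset.univ with hs_def
    have hs : s.card = n := by
      rw [hs_def, Finset.card_image_of_injective _ hf, Finset.card_univ, Fintype.card_fin]
    have hmem : ∀ i, f i ∈ s := fun i => Finset.mem_image_of_mem f (Finset.mem_univ i)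
    set σ0 : Fin n → Fin n := fun i => (Finset.orderIsoOfFin s hs).symm ⟨f i, hmem i⟩ with hσ0
    have hσinj : Function.Injective σ0 := by
      intro i j hij
      exact hf (Subtype.ext_iff.mp ((Finset.orderIsoOfFin s hs).symm.injective.eq_iff.mp hij))
    have hσbij : Function.Bijective σ0 := (Finite.injective_iff_bijective).mp hσinj
    set σ : Equiv.Perm (Fin n) := Equiv.ofBijective σ0 hσbij with hσ
    have hcomp : (fun i => b (f i)) =
        (fun i => b ((Finset.orderIsoOfFin s hs) i)) ∘ σ := by
      funext i
      simp only [Function.comp_apply, hσ, Equiv.ofBijective_apply, hσ0,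
        OrderIso.apply_symm_apply]
    rw [hcomp, AlternatingMap.map_perm, Units.smul_def]
    have hm : ιMulti_family R n b ⟨s, hs⟩ ∈
        Submodule.span R (Set.range (ιMulti_family R n b)) :=
      Submodule.subset_span (Set.mem_range_self _)
    rw [← Submodule.mem_toAddSubgroup] at hm ⊢
    exact AddSubgroup.zsmul_mem _ hm _
  · rw [Function.Injective] at hf
    push_neg at hf
    obtain ⟨i, j, hij, hne⟩ := by
      simpa [Function.Injective] using hf
    have h0 : ιMulti R n (fun i => b (f i)) = 0 :=
      AlternatingMap.map_eq_zero_of_eq _ _ (congrArg b hij) hne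
    rw [h0]
    exact Submodule.zero_mem _

theorem span_ιMulti_family :
    Submodule.span R (Set.range (ιMulti_family R n b)) = ⋀[R]^n M := by
  apply le_antisymm
  · rw [Submodule.span_le]
    rintro _ ⟨s, rfl⟩
    exact ιMulti_range R n ⟨_, rfl⟩
  · rw [← ιMulti_span_fixedDegree, Submodule.span_le]
    rintro _ ⟨v, rfl⟩
    rw [SetLike.mem_coe]
    have hv : ∀ i, v i = ∑ j ∈ (b.repr (v i)).support, b.repr (v i) j • b j := by
      intro i
      conv_lhs => rw [← b.linearCombination_repr (v i)]
      rw [Finsupp.linearCombination_apply, Finsupp.sum]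
    have hexp : ιMulti R n v
        = ∑ r ∈ Fintype.piFinset (fun i => (b.repr (v i)).support),
            (∏ i, b.repr (v i) (r i)) • ιMulti R n (fun i => b (r i)) := by
      calc ιMulti R n v
          = ιMulti R n (fun i => ∑ j ∈ (b.repr (v i)).support, b.repr (v i) j • b j) := by
            congr 1; funext i; exact hv i
        _ = ∑ r ∈ Fintype.piFinset (fun i => (b.repr (v i)).support),
              ιMulti R n (fun i => b.repr (v i) (r i) • b (r i)) :=
            (ιMulti R n).toMultilinearMap.map_sum_finset _ _
        _ = ∑ r ∈ Fintype.piFinset (fun i => (b.repr (v i)).support),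
              (∏ i, b.repr (v i) (r i)) • ιMulti R n (fun i => b (r i)) :=
            Finset.sum_congr rfl fun r _ =>
              (ιMulti R n).toMultilinearMap.map_smul_univ _ _
    rw [hexp]
    apply Submodule.sum_mem
    intro r _
    exact Submodule.smul_mem _ _ (ιMulti_basis_mem_span b n r)

/-- The family of wedge products of basis vectors, as elements of the exterior power. -/
noncomputable def expBasisFam (s : {s : Finset I // s.card = n}) : ⋀[R]^n M :=
  ⟨ιMulti_family R n b s, ιMulti_range R n (Set.mem_range_self _)⟩

theorem expBasisFam_linearIndependent : LinearIndependent R (expBasisFam b n) := by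
  rw [linearIndependent_iff']
  intro S g hg t ht
  -- apply the lift of the dual form of t
  classical
  set F : ∀ i, M [⋀^Fin i]→ₗ[R] R :=
    Function.update (fun _ => 0) n (dualForm b n t) with hF
  have hFn : F n = dualForm b n t := by rw [hF]; simp
  have := congrArg (fun x : ⋀[R]^n M =>
    ExteriorAlgebra.liftAlternating F (x : ExteriorAlgebra R M)) hg
  simp only [Submodule.coe_sum, Submodule.coe_smul, map_sum, map_smul,
    Submodule.coe_zero, map_zero] at this
  have key : ∀ s : {s : Finset I // s.card = n},
      ExteriorAlgebra.liftAlternating F ((expBasisFam b n s : ExteriorAlgebra R M))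
        = if s = t then 1 else 0 := by
    intro s
    show ExteriorAlgebra.liftAlternating F (ιMulti R n _) = _
    rw [ExteriorAlgebra.liftAlternating_apply_ιMulti, hFn]
    exact dualForm_apply b n t s
  rw [Finset.sum_congr rfl (fun s hs => by rw [key s])] at this
  simp only [smul_eq_mul, mul_ite, mul_one, mul_zero, Finset.sum_ite_eq' S, ht, if_true] at this
  exact this

include b in
theorem exteriorPower_free' : Module.Free R (⋀[R]^n M) := by
  apply Module.Free.of_basis (Module.Basis.mk (expBasisFam_linearIndependent b n) ?_)
  rw [top_le_iff]
  apply Submodule.map_injective_of_injective (Submodule.injective_subtype (⋀[R]^n M))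
  rw [Submodule.map_span, ← Set.range_comp]
  have : (Submodule.subtype (⋀[R]^n M)) ∘ (expBasisFam b n) = ιMulti_family R n b := rfl
  rw [this, Submodule.map_top, Submodule.range_subtype]
  exact span_ιMulti_family b n
end

instance exteriorPower_free (R M : Type*) [CommRing R] [AddCommGroup M] [Module R M]
    [Module.Free R M] (n : ℕ) : Module.Free R (⋀[R]^n M) := by
  classical
  letI : LinearOrder (Module.Free.ChooseBasisIndex R M) :=
    IsWellOrder.linearOrder WellOrderingRel
  exact exteriorPower_free' (Module.Free.chooseBasis R M) n


section KaehlerSplit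
open KaehlerDifferential TensorProduct
variable (k R : Type u) [Field k] [CommRing R] [Algebra k R] [Algebra.FormallySmooth k R]


/-- The twisted `k`-algebra structure map into the trivial square-zero extension. -/
noncomputable def twistHom : k →+* TrivSqZeroExt R (R ⊗[k] Ω[k⁄ℤ]) where
  toFun a := ⟨algebraMap k R a, 1 ⊗ₜ KaehlerDifferential.D ℤ k a⟩
  map_one' := by
    ext
    · simp
    · simp
  map_mul' a b := by
    ext
    · simp [TrivSqZeroExt.fst_mul]
      rfl
    · simp only [TrivSqZeroExt.snd_mul, TrivSqZeroExt.fst_mk, TrivSqZeroExt.snd_mk,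
        Derivation.leibniz, tmul_add, tmul_smul]
      erw [TrivSqZeroExt.snd_mul]
      rw [op_smul_eq_smul]
      erw [TrivSqZeroExt.fst_mk, TrivSqZeroExt.fst_mk, TrivSqZeroExt.snd_mk, TrivSqZeroExt.snd_mk]
      rw [algebraMap_smul, algebraMap_smul]
  map_zero' := by ext <;> simp
  map_add' a b := by
    ext
    · simp
      rfl
    · simp [tmul_add]
      rfl

theorem exists_retraction : ∃ l : (Ω[R⁄ℤ]) →ₗ[R] (R ⊗[k] Ω[k⁄ℤ]),
    l ∘ₗ KaehlerDifferential.mapBaseChange ℤ k R = LinearMap.id := by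
  classical
  letI : Algebra k (TrivSqZeroExt R (R ⊗[k] Ω[k⁄ℤ])) := (twistHom k R).toAlgebra
  set B' := TrivSqZeroExt R (R ⊗[k] Ω[k⁄ℤ]) with hB'
  let ψ : B' →ₐ[k] R :=
    { toRingHom := (TrivSqZeroExt.fstHom R R (R ⊗[k] Ω[k⁄ℤ])).toRingHom
      commutes' := fun a => rfl }
  have hker : (RingHom.ker ψ.toRingHom) ^ 2 = ⊥ := by
    rw [pow_two, eq_bot_iff]
    refine (Ideal.mul_le).mpr fun x hx y hy => ?_
    have hx' : TrivSqZeroExt.fst x = 0 := hx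
    have hy' : TrivSqZeroExt.fst y = 0 := hy
    rw [Ideal.mem_bot]
    ext
    · rw [TrivSqZeroExt.fst_mul, hx', zero_mul]; rfl
    · rw [TrivSqZeroExt.snd_mul, hx', hy']; simp
  have hnil : IsNilpotent (RingHom.ker ψ.toRingHom) := ⟨2, by rw [hker]; rfl⟩
  have hsurj : Function.Surjective ψ := fun x => ⟨TrivSqZeroExt.inl x, rfl⟩
  let e := Ideal.quotientKerAlgEquivOfSurjective hsurj
  let σ : R →ₐ[k] B' := Algebra.FormallySmooth.lift (RingHom.ker ψ.toRingHom) hnil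
    e.symm.toAlgHom
  have hfst : ∀ x : R, TrivSqZeroExt.fst (σ x) = x := by
    intro x
    have h1 : Ideal.Quotient.mkₐ k (RingHom.ker ψ.toRingHom) (σ x) = e.symm x :=
      Algebra.FormallySmooth.mk_lift _ hnil e.symm.toAlgHom x
    have h2 := congrArg e h1
    rw [AlgEquiv.apply_symm_apply] at h2
    exact h2
  let D : Derivation ℤ R (R ⊗[k] Ω[k⁄ℤ]) :=
    { toLinearMap := (((TrivSqZeroExt.sndHom R (R ⊗[k] Ω[k⁄ℤ])).toAddMonoidHom.comp
        σ.toRingHom.toAddMonoidHom)).toIntLinearMap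
      map_one_eq_zero' := by
        have : σ 1 = 1 := map_one σ
        simp [this]
      leibniz' := fun a b => by
        have h : σ (a * b) = σ a * σ b := map_mul σ a b
        show TrivSqZeroExt.snd (σ (a * b))
            = a • TrivSqZeroExt.snd (σ b) + b • TrivSqZeroExt.snd (σ a)
        rw [h, TrivSqZeroExt.snd_mul, hfst, hfst, op_smul_eq_smul] }
  have hD : ∀ x : R, D x = TrivSqZeroExt.snd (σ x) := fun _ => rfl
  refine ⟨D.liftKaehlerDifferential, ?_⟩
  have h1 : ∀ y : Ω[k⁄ℤ],
      D.liftKaehlerDifferential (KaehlerDifferential.mapBaseChange ℤ k R (1 ⊗ₜ y)) = 1 ⊗ₜ y := by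
    intro y
    have hy : y ∈ Submodule.span k (Set.range (KaehlerDifferential.D ℤ k)) := by
      rw [KaehlerDifferential.span_range_derivation]; trivial
    induction hy using Submodule.span_induction with
    | mem y hy =>
      obtain ⟨a, rfl⟩ := hy
      rw [KaehlerDifferential.mapBaseChange_tmul, one_smul, KaehlerDifferential.map_D,
        Derivation.liftKaehlerDifferential_comp_D]
      rw [hD, σ.commutes a]
      rfl
    | zero => simp [TensorProduct.tmul_zero]
    | add y z _ _ hy hz => rw [TensorProduct.tmul_add, map_add, map_add, hy, hz]
    | smul c y _ hy =>
      have h2 : (1 : R) ⊗ₜ[k] (c • y) = algebraMap k R c • ((1 : R) ⊗ₜ[k] y) := by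
        rw [TensorProduct.tmul_smul, algebraMap_smul]
      rw [h2, map_smul, map_smul, hy]
  refine LinearMap.ext fun x => ?_
  rw [LinearMap.comp_apply, LinearMap.id_apply]
  induction x with
  | zero => simp
  | tmul r y =>
    have : r ⊗ₜ[k] y = r • ((1 : R) ⊗ₜ[k] y) := by
      rw [TensorProduct.smul_tmul', smul_eq_mul, mul_one]
    rw [this, map_smul, map_smul, h1]
  | add x y hx hy => rw [map_add, map_add, hx, hy]

theorem kaehler_int_free (hfree : Module.Free R (Ω[R⁄k])) : Module.Free R (Ω[R⁄ℤ]) := by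
  obtain ⟨l, hl⟩ := exists_retraction k R
  have hexact := KaehlerDifferential.exact_mapBaseChange_map ℤ k R
  have hsurj := KaehlerDifferential.map_surjective ℤ k R
  obtain ⟨e, -⟩ := hexact.splitInjectiveEquiv hsurj ⟨l, hl⟩
  exact Module.Free.of_equiv e.symm

end KaehlerSplit

/-- Claim in Step 1 of Proposition 4.2: if `R` is a formally smooth algebra over a field `k`
with `Ω¹_{R/k}` free, then every exterior power `⋀ⁱ_R Ω¹_{R/ℤ}` is a free `R`-module;
in particular `Ω¹_{R/ℤ}` itself is free. -/
theorem exteriorPower_kaehlerDifferential_int_free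
    (k R : Type u) [Field k] [CommRing R] [Algebra k R]
    [Algebra.FormallySmooth k R]
    (hfree : Module.Free R (KaehlerDifferential k R)) :
    (∀ i : ℕ, Module.Free R (⋀[R]^i (KaehlerDifferential ℤ R))) ∧
      Module.Free R (KaehlerDifferential ℤ R) := by
  have hZ : Module.Free R (KaehlerDifferential ℤ R) := kaehler_int_free k R hfree
  exact ⟨fun i => exteriorPower_free R _ i, hZ⟩
end

section
/- Let k be a field, and let r ≥ 1 and m ≥ 1 be integers. Let f be a nonzero polynomial in k[x₁, …, x_r, t]. Then there exists a nonzero polynomial h ∈ k[x₁, …, x_r] such that for every field extension F of k and every point g = (g₁, …, g_r) ∈ F^r with h(g) ≠ 0, there exists s₀ ≥ 1 such that for all integers s ≥ s₀, the polynomial obtained from f by the substitution xᵢ ↦ xᵢ + gᵢ · t^{s(m+1)} (and t ↦ t), regarded as a polynomial in the single variable t with coefficients in F[x₁, …, x_r], has leading coefficient a unit of F[x₁, …, x_r] (i.e., a nonzero constant); in other words, after the substitution the polynomial is monic in t up to a unit, so t is integral over F[x₁, …, x_r] modulo it. -/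
universe u

open Polynomial MvPolynomial Finset

section helpers

variable {k F : Type*} [Field k] [Field F] [Algebra k F] {r : ℕ} (g : Fin r → F) (N : ℕ)

private lemma coeff_prod_of_natDegree_le' {R ι : Type*} [CommSemiring R] (s : Finset ι)
    (q : ι → Polynomial R) (b : ι → ℕ) (h : ∀ i ∈ s, (q i).natDegree ≤ b i) :
    (∏ i ∈ s, q i).coeff (∑ i ∈ s, b i) = ∏ i ∈ s, (q i).coeff (b i) := by
  induction s using Finset.cons_induction with
  | empty => simp
  | cons a s ha ih =>
    rw [Finset.prod_cons, Finset.sum_cons,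
      Polynomial.coeff_mul_add_eq_of_natDegree_le (h a (Finset.mem_cons_self a s))
        ((Polynomial.natDegree_prod_le _ _).trans
          (Finset.sum_le_sum fun i hi => h i (Finset.mem_cons_of_mem hi))),
      ih fun i hi => h i (Finset.mem_cons_of_mem hi), Finset.prod_cons]

private lemma natDegree_subst_factor_le (i : Fin r) :
    (Polynomial.C (MvPolynomial.X (R := F) i) +
      Polynomial.C (MvPolynomial.C (g i)) * Polynomial.X ^ N).natDegree ≤ N := by
  compute_degree

private lemma natDegree_substterm_le (d : Fin r →₀ ℕ) (c : k) :
    (algebraMap k (Polynomial (MvPolynomial (Fin r) F)) c *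
      ∏ i ∈ d.support, (Polynomial.C (MvPolynomial.X i) +
        Polynomial.C (MvPolynomial.C (g i)) * Polynomial.X ^ N) ^ d i).natDegree
      ≤ N * d.degree := by
  refine Polynomial.natDegree_mul_le.trans ?_
  rw [Polynomial.algebraMap_apply, Polynomial.natDegree_C, zero_add]
  refine (Polynomial.natDegree_prod_le _ _).trans ?_
  refine le_trans (Finset.sum_le_sum fun i _ =>
    (Polynomial.natDegree_pow_le).trans
      (Nat.mul_le_mul_left (d i) (natDegree_subst_factor_le g N i))) ?_
  rw [← Finset.sum_mul, Finsupp.degree_apply, mul_comm]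

private lemma natDegree_subst_le (p : MvPolynomial (Fin r) k) :
    ((MvPolynomial.aeval fun i => Polynomial.C (MvPolynomial.X i) +
        Polynomial.C (MvPolynomial.C (g i)) * Polynomial.X ^ N :
      MvPolynomial (Fin r) k →ₐ[k] Polynomial (MvPolynomial (Fin r) F)) p).natDegree
      ≤ N * p.totalDegree := by
  rw [MvPolynomial.aeval_def, MvPolynomial.eval₂_eq]
  refine Polynomial.natDegree_sum_le_of_forall_le _ _ fun d hd => ?_
  refine (natDegree_substterm_le g N d _).trans ?_
  exact Nat.mul_le_mul_left N (MvPolynomial.le_totalDegree hd)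

private lemma coeff_subst_eq (hN : 1 ≤ N) (p : MvPolynomial (Fin r) k) (e : ℕ)
    (he : p.totalDegree ≤ e) :
    ((MvPolynomial.aeval fun i => Polynomial.C (MvPolynomial.X i) +
        Polynomial.C (MvPolynomial.C (g i)) * Polynomial.X ^ N :
      MvPolynomial (Fin r) k →ₐ[k] Polynomial (MvPolynomial (Fin r) F)) p).coeff (N * e)
      = MvPolynomial.C
          (MvPolynomial.aeval g (MvPolynomial.homogeneousComponent e p)) := by
  rw [MvPolynomial.aeval_def, MvPolynomial.eval₂_eq, Polynomial.finset_sum_coeff,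
    MvPolynomial.homogeneousComponent_apply, map_sum, map_sum, Finset.sum_filter]
  refine Finset.sum_congr rfl fun d hd => ?_
  by_cases hdeg : d.degree = e
  · rw [if_pos hdeg]
    have hNe : N * e = ∑ i ∈ d.support, d i * N := by
      rw [← Finset.sum_mul, ← Finsupp.degree_apply, hdeg, mul_comm]
    rw [Polynomial.algebraMap_apply, Polynomial.coeff_C_mul, hNe,
      coeff_prod_of_natDegree_le' _ _ _ (fun i _ =>
        (Polynomial.natDegree_pow_le).trans
          (Nat.mul_le_mul_left (d i) (natDegree_subst_factor_le g N i)))]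
    have hfac : ∀ i : Fin r,
        (Polynomial.C (MvPolynomial.X (R := F) i) +
          Polynomial.C (MvPolynomial.C (g i)) * Polynomial.X ^ N).coeff N
        = MvPolynomial.C (g i) := by
      intro i
      rw [Polynomial.coeff_add, Polynomial.coeff_C, if_neg (by omega),
        Polynomial.coeff_C_mul, Polynomial.coeff_X_pow, if_pos rfl, mul_one, zero_add]
    have : ∀ i ∈ d.support,
        ((Polynomial.C (MvPolynomial.X (R := F) i) +
          Polynomial.C (MvPolynomial.C (g i)) * Polynomial.X ^ N) ^ d i).coeff (d i * N)
        = MvPolynomial.C (g i ^ d i) := by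
      intro i _
      rw [Polynomial.coeff_pow_of_natDegree_le (natDegree_subst_factor_le g N i),
        hfac i, ← map_pow]
    rw [Finset.prod_congr rfl this, ← map_prod, MvPolynomial.aeval_monomial, map_mul,
      ← MvPolynomial.algebraMap_eq, ← IsScalarTower.algebraMap_apply]
    rfl
  · rw [if_neg hdeg]
    have hlt : d.degree < e :=
      lt_of_le_of_ne (le_trans (MvPolynomial.le_totalDegree hd) he) hdeg
    refine Polynomial.coeff_eq_zero_of_natDegree_lt
      (lt_of_le_of_lt (natDegree_substterm_le g N d _) ?_)
    calc N * d.degree < N * d.degree + N := by omega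
      _ = N * (d.degree + 1) := by ring
      _ ≤ N * e := Nat.mul_le_mul_left N hlt

end helpers

/-- Lemma 6.2 (lem:monic): for a nonzero `f ∈ k[x₁,…,x_r,t]` there is a nonempty open set
of parameters `g` such that for all sufficiently large `s`, the substitution
`xᵢ ↦ xᵢ + gᵢ t^{s(m+1)}` makes `f` monic in `t` up to a unit. -/
theorem exists_generic_translate_monic_in_t
    (k : Type u) [Field k] (r m : ℕ) (hr : 1 ≤ r) (hm : 1 ≤ m)
    (f : Polynomial (MvPolynomial (Fin r) k)) (hf : f ≠ 0) :
    ∃ h : MvPolynomial (Fin r) k, h ≠ 0 ∧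
      ∀ (F : Type u) [Field F] [Algebra k F] (g : Fin r → F),
        MvPolynomial.aeval g h ≠ 0 →
        ∃ s₀ : ℕ, 1 ≤ s₀ ∧ ∀ s : ℕ, s₀ ≤ s →
          IsUnit (Polynomial.leadingCoeff
            (Polynomial.eval₂
              ((MvPolynomial.aeval fun i => Polynomial.C (MvPolynomial.X i) +
                  Polynomial.C (MvPolynomial.C (g i)) * Polynomial.X ^ (s * (m + 1)) :
                MvPolynomial (Fin r) k →ₐ[k] Polynomial (MvPolynomial (Fin r) F)) :
                  MvPolynomial (Fin r) k →+* Polynomial (MvPolynomial (Fin r) F))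
              Polynomial.X f)) := by
  classical
  -- the maximal total degree of a coefficient of `f`
  set d : ℕ := f.support.sup (fun n => (f.coeff n).totalDegree) with hd_def
  -- the set of indices realizing it
  set S : Finset ℕ := f.support.filter (fun n => (f.coeff n).totalDegree = d) with hS_def
  have hfs : f.support.Nonempty := Polynomial.nonempty_support_iff.mpr hf
  have hS : S.Nonempty := by
    obtain ⟨n, hn, hn'⟩ := Finset.exists_mem_eq_sup f.support hfs
      (fun n => (f.coeff n).totalDegree)
    exact ⟨n, Finset.mem_filter.mpr ⟨hn, hn'.symm⟩⟩
  set nmax : ℕ := S.max' hS with hnmax_def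
  have hnmaxS : nmax ∈ S := S.max'_mem hS
  have hnmax_supp : nmax ∈ f.support := (Finset.mem_filter.mp hnmaxS).1
  have hnmax_deg : (f.coeff nmax).totalDegree = d := (Finset.mem_filter.mp hnmaxS).2
  have hnmax_max : ∀ n ∈ f.support, (f.coeff n).totalDegree = d → n ≤ nmax :=
    fun n hn h' => S.le_max' n (Finset.mem_filter.mpr ⟨hn, h'⟩)
  have hle_d : ∀ n ∈ f.support, (f.coeff n).totalDegree ≤ d :=
    fun n hn => by rw [hd_def]; exact Finset.le_sup (f := fun n => (f.coeff n).totalDegree) hn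
  -- the leading homogeneous part
  refine ⟨MvPolynomial.homogeneousComponent d (f.coeff nmax), ?_, ?_⟩
  · -- nonzero
    have hc : f.coeff nmax ≠ 0 := Polynomial.mem_support_iff.mp hnmax_supp
    obtain ⟨α, hα, hα'⟩ := Finset.exists_mem_eq_sup (f.coeff nmax).support
      (MvPolynomial.support_nonempty.mpr hc) (fun s => s.sum fun _ e => e)
    intro hzero
    have : MvPolynomial.coeff α (MvPolynomial.homogeneousComponent d (f.coeff nmax))
        = MvPolynomial.coeff α (f.coeff nmax) := by
      rw [MvPolynomial.coeff_homogeneousComponent, if_pos]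
      rw [← hnmax_deg, MvPolynomial.totalDegree, hα']
      rfl
    rw [hzero] at this
    exact MvPolynomial.mem_support_iff.mp hα this.symm
  · intro F _ _ g hgh
    refine ⟨f.natDegree + 1, by omega, fun s hs => ?_⟩
    set N : ℕ := s * (m + 1) with hN_def
    have hNf : f.natDegree < N := by
      have : f.natDegree + 1 ≤ s := hs
      calc f.natDegree < f.natDegree + 1 := by omega
        _ ≤ s := hs
        _ ≤ s * (m + 1) := by nlinarith
    have hN1 : 1 ≤ N := by omega
    set φ := ((MvPolynomial.aeval fun i => Polynomial.C (MvPolynomial.X i) +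
                  Polynomial.C (MvPolynomial.C (g i)) * Polynomial.X ^ N :
                MvPolynomial (Fin r) k →ₐ[k] Polynomial (MvPolynomial (Fin r) F)) :
                  MvPolynomial (Fin r) k →+* Polynomial (MvPolynomial (Fin r) F)) with hφ
    set P : Polynomial (MvPolynomial (Fin r) F) := Polynomial.eval₂ φ Polynomial.X f with hP
    set K : ℕ := N * d + nmax with hK
    have hPsum : ∀ j : ℕ, P.coeff j = ∑ n ∈ f.support, (φ (f.coeff n) * Polynomial.X ^ n).coeff j := by
      intro j
      rw [hP, Polynomial.eval₂_eq_sum, Polynomial.sum_def, Polynomial.finset_sum_coeff]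
    -- vanishing above K
    have hvanish : ∀ n ∈ f.support, ∀ j : ℕ, K < j →
        (φ (f.coeff n) * Polynomial.X ^ n).coeff j = 0 := by
      intro n hn j hj
      rw [Polynomial.coeff_mul_X_pow']
      split_ifs with hnj
      · refine Polynomial.coeff_eq_zero_of_natDegree_lt
          (lt_of_le_of_lt (natDegree_subst_le g N _) ?_)
        have ht : (f.coeff n).totalDegree ≤ d := hle_d n hn
        by_cases hcase : n ≤ nmax
        · have h1 : N * (f.coeff n).totalDegree ≤ N * d := Nat.mul_le_mul_left N ht
          omega
        · have htlt : (f.coeff n).totalDegree < d := by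
            rcases lt_or_eq_of_le ht with h' | h'
            · exact h'
            · exact absurd (hnmax_max n hn h') hcase
          have h1 : N * ((f.coeff n).totalDegree + 1) ≤ N * d := Nat.mul_le_mul_left N htlt
          have h2 : n ≤ f.natDegree := Polynomial.le_natDegree_of_mem_supp n hn
          have h3 : N * (f.coeff n).totalDegree + N ≤ N * d := by
            rw [Nat.mul_add, Nat.mul_one] at h1; exact h1
          omega
      · rfl
    have hcoeffK : P.coeff K = MvPolynomial.C
        (MvPolynomial.aeval g (MvPolynomial.homogeneousComponent d (f.coeff nmax))) := by
      rw [hPsum]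
      rw [Finset.sum_eq_single nmax]
      · rw [Polynomial.coeff_mul_X_pow', if_pos (by omega : nmax ≤ K),
          (by omega : K - nmax = N * d)]
        exact coeff_subst_eq g N hN1 _ d hnmax_deg.le
      · intro n hn hne
        rw [Polynomial.coeff_mul_X_pow']
        split_ifs with hnj
        · refine Polynomial.coeff_eq_zero_of_natDegree_lt
            (lt_of_le_of_lt (natDegree_subst_le g N _) ?_)
          have ht : (f.coeff n).totalDegree ≤ d := hle_d n hn
          rcases lt_trichotomy n nmax with hcase | hcase | hcase
          · have h1 : N * (f.coeff n).totalDegree ≤ N * d := Nat.mul_le_mul_left N ht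
            omega
          · exact absurd hcase hne
          · have htlt : (f.coeff n).totalDegree < d := by
              rcases lt_or_eq_of_le ht with h' | h'
              · exact h'
              · exact absurd (hnmax_max n hn h') (by omega)
            have h1 : N * ((f.coeff n).totalDegree + 1) ≤ N * d := Nat.mul_le_mul_left N htlt
            have h2 : n ≤ f.natDegree := Polynomial.le_natDegree_of_mem_supp n hn
            have h3 : N * (f.coeff n).totalDegree + N ≤ N * d := by
              rw [Nat.mul_add, Nat.mul_one] at h1; exact h1
            omega
        · rfl
      · intro hn
        rw [Polynomial.notMem_support_iff.mp hn, map_zero, zero_mul, Polynomial.coeff_zero]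
    have hKne : P.coeff K ≠ 0 := by
      rw [hcoeffK]
      rw [Ne, MvPolynomial.C_eq_zero]
      exact hgh
    have hdegle : P.natDegree ≤ K :=
      Polynomial.natDegree_le_iff_coeff_eq_zero.mpr (fun j hj => by
        rw [hPsum]; exact Finset.sum_eq_zero fun n hn => hvanish n hn j hj)
    have hdegge : K ≤ P.natDegree := Polynomial.le_natDegree_of_ne_zero hKne
    have hdeg : P.natDegree = K := le_antisymm hdegle hdegge
    rw [Polynomial.leadingCoeff, hdeg, hcoeffK]
    exact (isUnit_iff_ne_zero.mpr hgh).map (MvPolynomial.C : F →+* MvPolynomial (Fin r) F)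
end
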